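/- (Exactness of the weighted online DMD update.) Let 0 < ρ ≤ 1, let x₁,…,x_{k+1} and y₁,…,y_{k+1} be vectors in ℝⁿ, and suppose the weighted Gram matrix G_k = Σ_{i=1}^k ρ^{k−i} xᵢ xᵢᵀ is positive definite. Define A_k = (Σ_{i=1}^k ρ^{k−i} yᵢ xᵢᵀ) G_k⁻¹ and P̂_k = ρ⁻¹ G_k⁻¹, and set γ_{k+1} = 1/(1 + x_{k+1}ᵀ P̂_k x_{k+1}). Then G_{k+1} = Σ_{i=1}^{k+1} ρ^{k+1−i} xᵢ xᵢᵀ is invertible and A_k + γ_{k+1} (y_{k+1} − A_k x_{k+1}) x_{k+1}ᵀ P̂_k = (Σ_{i=1}^{k+1} ρ^{k+1−i} yᵢ xᵢᵀ) G_{k+1}⁻¹; that is, the update produces exactly the minimizer of the exponentially weighted cost Σ_{i=1}^{k+1} ρ^{k+1−i} ‖yᵢ − A xᵢ‖² (when G_{k+1} is invertible this minimizer is unique). -/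

import Mathlib

open Matrix

private lemma vmv_mulVec {n : ℕ} (a b v : Fin n → ℝ) :
    (vecMulVec a b).mulVec v = (b ⬝ᵥ v) • a := by
  ext i
  simp [mulVec, vecMulVec_apply, dotProduct, Finset.mul_sum, mul_comm, mul_assoc, mul_left_comm]

private lemma mul_vmv {n : ℕ} (M : Matrix (Fin n) (Fin n) ℝ) (a b : Fin n → ℝ) :
    M * vecMulVec a b = vecMulVec (M.mulVec a) b := by
  ext i j
  simp only [mul_apply, vecMulVec_apply, mulVec, dotProduct, Finset.sum_mul]
  exact Finset.sum_congr rfl fun l _ => by ring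

private lemma vmv_mul {n : ℕ} (a b : Fin n → ℝ) (M : Matrix (Fin n) (Fin n) ℝ) :
    vecMulVec a b * M = vecMulVec a (vecMul b M) := by
  ext i j
  simp [mul_apply, vecMulVec_apply, vecMul, dotProduct, Finset.mul_sum, mul_assoc]

private lemma vmv_mul_vmv {n : ℕ} (a b c d : Fin n → ℝ) :
    vecMulVec a b * vecMulVec c d = (b ⬝ᵥ c) • vecMulVec a d := by
  rw [vmv_mul]
  ext i j
  simp only [vecMulVec_apply, vecMul, dotProduct, Matrix.smul_apply, smul_eq_mul, Finset.sum_mul]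
  rw [Finset.mul_sum]
  exact Finset.sum_congr rfl fun l _ => by ring

private lemma vmv_sub {n : ℕ} (a b c : Fin n → ℝ) :
    vecMulVec (a - b) c = vecMulVec a c - vecMulVec b c := by
  ext i j
  simp [vecMulVec_apply, sub_mul]

private lemma vmv_posSemidef {n : ℕ} (v : Fin n → ℝ) : (vecMulVec v v).PosSemidef := by
  refine PosSemidef.of_dotProduct_mulVec_nonneg ?_ ?_
  · ext i j
    simp [conjTranspose_apply, vecMulVec_apply, mul_comm]
  · intro w
    rw [vmv_mulVec]
    simp only [star_trivial, dotProduct_smul, smul_eq_mul]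
    rw [dotProduct_comm]
    exact mul_self_nonneg _

theorem weighted_online_dmd_update_exact (n k : ℕ) (ρ : ℝ) (hρ0 : 0 < ρ) (hρ1 : ρ ≤ 1)
    (x y : Fin (k + 1) → (Fin n → ℝ))
    (hG : (∑ i : Fin k, ρ ^ (k - 1 - (i : ℕ)) •
        vecMulVec (x i.castSucc) (x i.castSucc)).PosDef) :
    IsUnit (∑ i : Fin (k + 1), ρ ^ (k - (i : ℕ)) • vecMulVec (x i) (x i)) ∧
    (∑ i : Fin k, ρ ^ (k - 1 - (i : ℕ)) • vecMulVec (y i.castSucc) (x i.castSucc)) *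
        (∑ i : Fin k, ρ ^ (k - 1 - (i : ℕ)) • vecMulVec (x i.castSucc) (x i.castSucc))⁻¹ +
      (1 / (1 + x (Fin.last k) ⬝ᵥ
          (ρ⁻¹ • (∑ i : Fin k, ρ ^ (k - 1 - (i : ℕ)) •
            vecMulVec (x i.castSucc) (x i.castSucc))⁻¹).mulVec (x (Fin.last k)))) •
        (vecMulVec
          (y (Fin.last k) -
            ((∑ i : Fin k, ρ ^ (k - 1 - (i : ℕ)) • vecMulVec (y i.castSucc) (x i.castSucc)) *
              (∑ i : Fin k, ρ ^ (k - 1 - (i : ℕ)) •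
                vecMulVec (x i.castSucc) (x i.castSucc))⁻¹).mulVec (x (Fin.last k)))
          (x (Fin.last k)) *
          (ρ⁻¹ • (∑ i : Fin k, ρ ^ (k - 1 - (i : ℕ)) •
            vecMulVec (x i.castSucc) (x i.castSucc))⁻¹)) =
    (∑ i : Fin (k + 1), ρ ^ (k - (i : ℕ)) • vecMulVec (y i) (x i)) *
      (∑ i : Fin (k + 1), ρ ^ (k - (i : ℕ)) • vecMulVec (x i) (x i))⁻¹ := by
  set G := ∑ i : Fin k, ρ ^ (k - 1 - (i : ℕ)) • vecMulVec (x i.castSucc) (x i.castSucc) with hGdef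
  set B := ∑ i : Fin k, ρ ^ (k - 1 - (i : ℕ)) • vecMulVec (y i.castSucc) (x i.castSucc) with hBdef
  set x' := x (Fin.last k) with hx'
  set y' := y (Fin.last k) with hy'
  have hpow : ∀ i : Fin k, ρ ^ (k - ((i.castSucc : Fin (k+1)) : ℕ)) = ρ * ρ ^ (k - 1 - (i : ℕ)) := by
    intro i
    have hik : (i : ℕ) < k := i.isLt
    have h : k - ((i.castSucc : Fin (k+1)) : ℕ) = (k - 1 - (i : ℕ)) + 1 := by
      simp only [Fin.coe_castSucc]; omega
    rw [h, pow_succ, mul_comm]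
  have hxsum : (∑ i : Fin (k + 1), ρ ^ (k - (i : ℕ)) • vecMulVec (x i) (x i)) =
      ρ • G + vecMulVec x' x' := by
    rw [Fin.sum_univ_castSucc, hGdef, Finset.smul_sum]
    congr 1
    · exact Finset.sum_congr rfl fun i _ => by rw [hpow i, mul_smul]
    · simp [hx']
  have hysum : (∑ i : Fin (k + 1), ρ ^ (k - (i : ℕ)) • vecMulVec (y i) (x i)) =
      ρ • B + vecMulVec y' x' := by
    rw [Fin.sum_univ_castSucc, hBdef, Finset.smul_sum]
    congr 1
    · exact Finset.sum_congr rfl fun i _ => by rw [hpow i, mul_smul]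
    · simp [hx', hy']
  have hρG : (ρ • G).PosDef := by
    refine PosDef.of_dotProduct_mulVec_pos ?_ ?_
    · have := hG.1
      unfold Matrix.IsHermitian at this ⊢
      rw [conjTranspose_smul, this]
      simp
    · intro v hv
      rw [smul_mulVec, dotProduct_smul]
      exact mul_pos hρ0 (hG.dotProduct_mulVec_pos hv)
  have hG' : (ρ • G + vecMulVec x' x').PosDef := hρG.add_posSemidef (vmv_posSemidef x')
  have hGdet : IsUnit G.det := isUnit_iff_ne_zero.mpr hG.det_pos.ne'
  have hG'det : IsUnit (ρ • G + vecMulVec x' x').det := isUnit_iff_ne_zero.mpr hG'.det_pos.ne'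
  refine ⟨by rw [hxsum]; exact hG'.isUnit, ?_⟩
  rw [hxsum, hysum]
  -- notation
  set P := ρ⁻¹ • G⁻¹ with hPdef
  set A := B * G⁻¹ with hAdef
  set c := x' ⬝ᵥ P.mulVec x' with hcdef
  set v := y' - A.mulVec x' with hvdef
  have hc0 : 0 ≤ c := by
    rw [hcdef, hPdef, smul_mulVec, dotProduct_smul, smul_eq_mul]
    have h1 := hG.inv.posSemidef.dotProduct_mulVec_nonneg x'
    simp only [star_trivial] at h1
    exact mul_nonneg (inv_nonneg.mpr hρ0.le) h1
  have h1c : (0:ℝ) < 1 + c := by linarith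
  have hγ : (1 / (1 + c)) * (1 + c) = 1 := by field_simp
  -- key multiplicative identities
  have hAG : A * G = B := by
    rw [hAdef, Matrix.mul_assoc, Matrix.nonsing_inv_mul _ hGdet, Matrix.mul_one]
  have hPG : P * (ρ • G) = 1 := by
    rw [hPdef, Matrix.smul_mul, Matrix.mul_smul, Matrix.nonsing_inv_mul _ hGdet, smul_smul,
      inv_mul_cancel₀ hρ0.ne', one_smul]
  have hinv : Invertible (ρ • G + vecMulVec x' x') := (ρ • G + vecMulVec x' x').invertibleOfIsUnitDet hG'det
  rw [eq_comm, Matrix.mul_inv_eq_iff_eq_mul_of_invertible]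
  -- expand the product
  have hVPX : vecMulVec v x' * P * vecMulVec x' x' = c • vecMulVec v x' := by
    rw [vmv_mul, vmv_mul_vmv]
    congr 1
    rw [hcdef, dotProduct_mulVec]
  have hVPρG : vecMulVec v x' * P * (ρ • G) = vecMulVec v x' := by
    rw [Matrix.mul_assoc, hPG, Matrix.mul_one]
  rw [add_mul, Matrix.smul_mul, mul_add, mul_add, Matrix.mul_smul, hAG, hVPρG, hVPX, mul_vmv,
    smul_add]
  have hcomb : (1 / (1 + c)) • vecMulVec v x' + (1 / (1 + c)) • (c • vecMulVec v x') =
      vecMulVec v x' := by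
    rw [smul_smul, ← add_smul]
    have h : 1 / (1 + c) + 1 / (1 + c) * c = 1 := by field_simp
    rw [h, one_smul]
  rw [add_assoc, hcomb, hvdef, vmv_sub]
  abel
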